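/- Suppose r + s ≡ 1 (mod 4). Then: (1) if s is even, 𝔎_{r,s} = ℝω ⊕ 𝔎′_{r,s} (an internal direct sum of subspaces); (2) if s is odd, 𝔎_{r,s} = 𝔎′_{r,s}. -/

import Mathlib

/-
Setting (Eberlein, "Isometries of Clifford Algebras II"):
`F` a field with `char F ≠ 2`, `n = r + s > 0`, and `Cl(r,s)` the Clifford algebra of `F^n`
in which `eᵢ·eⱼ = -eⱼ·eᵢ` for `i ≠ j`, `eᵢ² = -1` for the first `r` indices and
`eᵢ² = +1` for the last `s` indices.
-/

open CliffordAlgebra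

namespace CliffPaper

/-- The quadratic form `q(x) = -x₁² - … - x_r² + x_{r+1}² + … + x_n²` on `F^(r+s)`. -/
noncomputable def Qf (F : Type*) [Field F] (r s : ℕ) : QuadraticForm F (Fin (r + s) → F) :=
  QuadraticMap.weightedSumSquares F (fun i : Fin (r + s) => if (i : ℕ) < r then (-1 : F) else 1)

/-- The Clifford algebra `Cl(r,s)`. -/
abbrev Cl (F : Type*) [Field F] (r s : ℕ) : Type _ := CliffordAlgebra (Qf F r s)

/-- The generator `e_i` of `Cl(r,s)` (`i` is a zero-based index, so `e_i² = -1` for `i < r`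
and `e_i² = +1` for `r ≤ i`). -/
noncomputable def gen (F : Type*) [Field F] (r s : ℕ) (i : Fin (r + s)) : Cl F r s :=
  ι (Qf F r s) (Pi.single i 1)

/-- For a multi-index `I = {i₁ < … < i_k}`, the product `e_I = e_{i₁} ⋯ e_{i_k}`. -/
noncomputable def eProd (F : Type*) [Field F] (r s : ℕ) (I : Finset (Fin (r + s))) : Cl F r s :=
  ((I.sort (· ≤ ·)).map (gen F r s)).prod

/-- Clifford conjugation: the unique anti-automorphism `c` of `Cl(r,s)` with `c ∘ c = id` and
`c(v) = -v` for all `v ∈ F^n`; concretely, reversal composed with the grade involution. -/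
noncomputable def conj (F : Type*) [Field F] (r s : ℕ) : Cl F r s →ₗ[F] Cl F r s :=
  (reverse (Q := Qf F r s)).comp (involute (Q := Qf F r s)).toLinearMap

theorem conj_mul (F : Type*) [Field F] (r s : ℕ) (a b : Cl F r s) :
    conj F r s (a * b) = conj F r s b * conj F r s a := by
  simp [conj, reverse.map_mul]

/-- `𝔊_{r,s} = {x ∈ Cl(r,s) : c(x) = -x}`, the `-1`-eigenspace of Clifford conjugation,
as an `F`-subspace of `Cl(r,s)`. -/
noncomputable def Gsub (F : Type*) [Field F] (r s : ℕ) : Submodule F (Cl F r s) :=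
  LinearMap.ker (conj F r s + LinearMap.id)

theorem mem_Gsub {F : Type*} [Field F] {r s : ℕ} (x : Cl F r s) :
    x ∈ Gsub F r s ↔ conj F r s x = -x := by
  simp [Gsub, LinearMap.mem_ker, add_eq_zero_iff_eq_neg]

attribute [local instance] LieRing.ofAssociativeRing

/-- `𝔊_{r,s}` as a Lie subalgebra of `Cl(r,s)` with the commutator bracket
`⁅x,y⁆ = x*y - y*x`. -/
noncomputable def GLie (F : Type*) [Field F] (r s : ℕ) : LieSubalgebra F (Cl F r s) where
  toSubmodule := Gsub F r s
  lie_mem' := by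
    intro x y hx hy
    have hx' : x ∈ Gsub F r s := hx
    have hy' : y ∈ Gsub F r s := hy
    show ⁅x, y⁆ ∈ Gsub F r s
    rw [mem_Gsub] at hx' hy' ⊢
    rw [Ring.lie_def, map_sub, conj_mul, conj_mul, hx', hy']
    noncomm_ring

/-- `𝔎_{r,s}`: the `+1`-eigenspace of `β` restricted to `𝔊_{r,s}`. -/
noncomputable def Ksub (F : Type*) [Field F] (r s : ℕ) (β : Cl F r s ≃ₐ[F] Cl F r s) :
    Submodule F (Cl F r s) :=
  LinearMap.ker (β.toLinearMap - LinearMap.id) ⊓ Gsub F r s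

/-- `𝔓_{r,s}`: the `-1`-eigenspace of `β` restricted to `𝔊_{r,s}`. -/
noncomputable def Psub (F : Type*) [Field F] (r s : ℕ) (β : Cl F r s ≃ₐ[F] Cl F r s) :
    Submodule F (Cl F r s) :=
  LinearMap.ker (β.toLinearMap + LinearMap.id) ⊓ Gsub F r s

/-- The center `𝔷(𝔎_{r,s}) = {x ∈ 𝔎_{r,s} : [x,y] = 0 for all y ∈ 𝔎_{r,s}}`. -/
noncomputable def ZKsub (F : Type*) [Field F] (r s : ℕ) (β : Cl F r s ≃ₐ[F] Cl F r s) :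
    Submodule F (Cl F r s) where
  carrier := {x | x ∈ Ksub F r s β ∧ ∀ y ∈ Ksub F r s β, x * y = y * x}
  zero_mem' := ⟨zero_mem _, fun y _ => by simp⟩
  add_mem' := fun {a b} ha hb => ⟨add_mem ha.1 hb.1, fun y hy => by
    rw [add_mul, mul_add, ha.2 y hy, hb.2 y hy]⟩
  smul_mem' := fun c a ha => ⟨Submodule.smul_mem _ c ha.1, fun y hy => by
    rw [smul_mul_assoc, mul_smul_comm, ha.2 y hy]⟩

/-- `𝔥_{r,s}`: the span of the `e_I` with `|I| ≡ 1, 2 (mod 4)` and `I ≠ {1,…,n}`. -/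
noncomputable def Hsub (F : Type*) [Field F] (r s : ℕ) : Submodule F (Cl F r s) :=
  Submodule.span F {x | ∃ I : Finset (Fin (r + s)), I.Nonempty ∧ I ≠ Finset.univ ∧
    (I.card % 4 = 1 ∨ I.card % 4 = 2) ∧ x = eProd F r s I}

/-- The volume element `ω = e₁e₂⋯e_n`. -/
noncomputable def omegaEl (F : Type*) [Field F] (r s : ℕ) : Cl F r s :=
  eProd F r s Finset.univ


section AuxCP
variable (r s : ℕ)

def qi (i : Fin (r + s)) : ℝ := if (i : ℕ) < r then -1 else 1

lemma Qf_single (i : Fin (r + s)) : Qf ℝ r s (Pi.single i 1) = qi r s i := by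
  classical
  rw [Qf, QuadraticMap.weightedSumSquares_apply, Finset.sum_eq_single i]
  · simp [qi]
  · intro j _ hj
    simp [Pi.single_apply, hj]
  · simp

lemma polar_single {i j : Fin (r + s)} (h : i ≠ j) :
    QuadraticMap.polar (Qf ℝ r s) (Pi.single i 1) (Pi.single j 1) = 0 := by
  classical
  simp only [QuadraticMap.polar, Qf, QuadraticMap.weightedSumSquares_apply]
  rw [← Finset.sum_sub_distrib, ← Finset.sum_sub_distrib]
  apply Finset.sum_eq_zero
  intro k _
  by_cases hk : k = i
  · subst hk
    simp [Pi.single_apply, h.symm]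
  · by_cases hk' : k = j
    · subst hk'
      simp [Pi.single_apply, hk]
    · simp [Pi.single_apply, hk, hk']

lemma gen_sq (i : Fin (r + s)) :
    gen ℝ r s i * gen ℝ r s i = algebraMap ℝ _ (qi r s i) := by
  rw [gen, ι_sq_scalar, Qf_single]

lemma gen_anticomm {i j : Fin (r + s)} (h : i ≠ j) :
    gen ℝ r s i * gen ℝ r s j = -(gen ℝ r s j * gen ℝ r s i) := by
  have := ι_mul_ι_add_swap (Q := Qf ℝ r s) (Pi.single i 1) (Pi.single j 1)
  rw [polar_single r s h, map_zero] at this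
  exact eq_neg_of_add_eq_zero_left this

lemma Qf_apply' (v : Fin (r + s) → ℝ) : Qf ℝ r s v = ∑ i, qi r s i * (v i * v i) := by
  rw [Qf, QuadraticMap.weightedSumSquares_apply]
  exact Finset.sum_congr rfl fun i _ => by rw [qi, smul_eq_mul]

/-- product of generators over a list -/
noncomputable def prodGen (L : List (Fin (r + s))) : Cl ℝ r s :=
  (L.map (gen ℝ r s)).prod

@[simp] lemma prodGen_nil : prodGen r s [] = 1 := rfl

@[simp] lemma prodGen_cons (a : Fin (r + s)) (L : List (Fin (r + s))) :
    prodGen r s (a :: L) = gen ℝ r s a * prodGen r s L := by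
  simp [prodGen]

lemma eProd_eq_prodGen (I : Finset (Fin (r + s))) :
    eProd ℝ r s I = prodGen r s (I.sort (· ≤ ·)) := rfl

lemma sorted_toFinset_sort {L : List (Fin (r + s))} (h : L.Pairwise (· < ·)) :
    L.toFinset.sort (· ≤ ·) = L := by
  apply List.Perm.eq_of_pairwise' (Finset.pairwise_sort _ _) (h.imp le_of_lt)
  refine (List.perm_ext_iff_of_nodup (Finset.sort_nodup _ _) h.nodup).2 ?_
  intro a
  simp [Finset.mem_sort]

lemma prodGen_sorted_eq_eProd {L : List (Fin (r + s))} (h : L.Pairwise (· < ·)) :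
    prodGen r s L = eProd ℝ r s L.toFinset := by
  rw [eProd_eq_prodGen, sorted_toFinset_sort r s h]

/-- Key structure lemma: multiplying a sorted product by a generator on the left
gives a scalar multiple of another sorted product. -/
lemma gen_mul_prodGen (L : List (Fin (r + s))) (hL : L.Pairwise (· < ·)) (i : Fin (r + s)) :
    ∃ (c : ℝ) (L' : List (Fin (r + s))), L'.Pairwise (· < ·) ∧ (∀ x ∈ L', x ∈ i :: L) ∧
      gen ℝ r s i * prodGen r s L = c • prodGen r s L' := by
  induction L with
  | nil =>
    exact ⟨1, [i], List.pairwise_singleton _ i, by simp, by simp⟩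
  | cons a L ih =>
    rcases lt_trichotomy i a with hia | hia | hia
    · refine ⟨1, i :: a :: L, ?_, by simp, by simp⟩
      refine List.pairwise_cons.2 ⟨?_, hL⟩
      intro x hx
      rcases List.mem_cons.1 hx with h1 | h1
      · exact h1 ▸ hia
      · exact lt_trans hia (List.rel_of_pairwise_cons hL h1)
    · subst hia
      refine ⟨qi r s i, L, hL.of_cons, fun x hx => by simp [hx], ?_⟩
      rw [prodGen_cons, ← mul_assoc, gen_sq, Algebra.smul_def]
    · obtain ⟨c, L', hs', hmem', heq'⟩ := ih hL.of_cons
      have ha_lt : ∀ x ∈ L', a < x := by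
        intro x hx
        rcases List.mem_cons.1 (hmem' x hx) with h1 | h1
        · exact h1 ▸ hia
        · exact List.rel_of_pairwise_cons hL h1
      refine ⟨-c, a :: L', ?_, ?_, ?_⟩
      · exact List.pairwise_cons.2 ⟨ha_lt, hs'⟩
      · intro x hx
        rcases List.mem_cons.1 hx with h1 | h1
        · simp [h1]
        · rcases List.mem_cons.1 (hmem' x h1) with h2 | h2 <;> simp [h2]
      · rw [prodGen_cons, ← mul_assoc, gen_anticomm r s (ne_of_gt hia), neg_mul, mul_assoc,
          heq', neg_smul, prodGen_cons]
        rw [mul_smul_comm]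

/-- every element is in the span of the `eProd I` -/
lemma span_eProd_top :
    Submodule.span ℝ (Set.range (eProd ℝ r s)) = ⊤ := by
  set S := Submodule.span ℝ (Set.range (eProd ℝ r s)) with hS
  have h1 : (1 : Cl ℝ r s) ∈ S := by
    have : eProd ℝ r s ∅ = 1 := by simp [eProd]
    exact this ▸ Submodule.subset_span ⟨∅, rfl⟩
  have hgen : ∀ (i : Fin (r + s)) (x : Cl ℝ r s), x ∈ S → gen ℝ r s i * x ∈ S := by
    intro i x hx
    induction hx using Submodule.span_induction with
    | mem y hy =>
      obtain ⟨I, rfl⟩ := hy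
      obtain ⟨c, L', hs', _, heq⟩ := gen_mul_prodGen r s (I.sort (· ≤ ·))
        (Finset.sortedLT_sort I).pairwise i
      rw [eProd_eq_prodGen, heq, prodGen_sorted_eq_eProd r s hs']
      exact Submodule.smul_mem _ _ (Submodule.subset_span ⟨_, rfl⟩)
    | zero => simp
    | add y z _ _ hy hz => rw [mul_add]; exact add_mem hy hz
    | smul c y _ hy => rw [mul_smul_comm]; exact Submodule.smul_mem _ _ hy
  have hι : ∀ (v : Fin (r + s) → ℝ) (x : Cl ℝ r s), x ∈ S → ι (Qf ℝ r s) v * x ∈ S := by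
    intro v x hx
    have hv : ι (Qf ℝ r s) v = ∑ i, v i • gen ℝ r s i := by
      conv_lhs => rw [← Finset.univ_sum_single v]
      rw [map_sum]
      refine Finset.sum_congr rfl fun i _ => ?_
      rw [gen, ← map_smul]
      congr 1
      ext j
      by_cases h : j = i <;> simp [Pi.single_apply, h]
    rw [hv, Finset.sum_mul]
    refine Submodule.sum_mem _ fun i _ => ?_
    rw [smul_mul_assoc]
    exact Submodule.smul_mem _ _ (hgen i x hx)
  have key : ∀ x : Cl ℝ r s, ∀ y ∈ S, x * y ∈ S := by
    intro x
    induction x using CliffordAlgebra.induction with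
    | algebraMap c =>
      intro y hy
      rw [← Algebra.smul_def]
      exact Submodule.smul_mem _ _ hy
    | ι v => exact fun y hy => hι v y hy
    | mul x₁ x₂ h₁ h₂ => intro y hy; rw [mul_assoc]; exact h₁ _ (h₂ _ hy)
    | add x₁ x₂ h₁ h₂ => intro y hy; rw [add_mul]; exact add_mem (h₁ y hy) (h₂ y hy)
  rw [eq_top_iff]
  intro x _
  simpa using key x 1 h1

/-- triangular numbers -/
def tri : ℕ → ℕ
  | 0 => 0
  | k + 1 => tri k + k

lemma tri_add_mod (k : ℕ) : (tri k + k) % 2 = if k % 4 = 1 ∨ k % 4 = 2 then 1 else 0 := by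
  induction k using Nat.strong_induction_on with
  | _ k ih =>
    match k with
    | 0 => simp [tri]
    | 1 => simp [tri]
    | 2 => simp [tri]
    | 3 => simp [tri]
    | (m + 4) =>
      have h4 : tri (m + 4) = tri m + (4 * m + 6) := by
        show tri (m + 3) + (m + 3) = _
        show tri (m + 2) + (m + 2) + (m + 3) = _
        show tri (m + 1) + (m + 1) + (m + 2) + (m + 3) = _
        show tri m + m + (m + 1) + (m + 2) + (m + 3) = _
        ring
      have hmod : (m + 4) % 4 = m % 4 := Nat.add_mod_right m 4
      rw [h4, hmod]
      have := ih m (by omega)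
      by_cases h : m % 4 = 1 ∨ m % 4 = 2 <;> simp [h] at this ⊢ <;> omega

lemma neg_one_pow_tri (k : ℕ) :
    ((-1 : ℝ)) ^ (tri k + k) = if k % 4 = 1 ∨ k % 4 = 2 then -1 else 1 := by
  have h := tri_add_mod k
  by_cases hc : k % 4 = 1 ∨ k % 4 = 2
  · rw [if_pos hc] at h ⊢
    have : Odd (tri k + k) := Nat.odd_iff.2 h
    exact this.neg_one_pow
  · rw [if_neg hc] at h ⊢
    have : Even (tri k + k) := Nat.even_iff.2 h
    exact this.neg_one_pow

/-- moving a generator across a product of distinct other generators -/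
lemma prodGen_mul_gen (i : Fin (r + s)) :
    ∀ (L : List (Fin (r + s))), i ∉ L →
      prodGen r s L * gen ℝ r s i = ((-1 : ℝ) ^ L.length) • (gen ℝ r s i * prodGen r s L) := by
  intro L
  induction L with
  | nil => simp
  | cons a L ih =>
    intro hi
    have hia : i ≠ a := fun h => hi (h ▸ List.mem_cons_self)
    have hiL : i ∉ L := fun h => hi (List.mem_cons_of_mem a h)
    rw [prodGen_cons, mul_assoc, ih hiL, mul_smul_comm, ← mul_assoc,
      gen_anticomm r s (Ne.symm hia), List.length_cons, pow_succ]
    rw [neg_mul, mul_assoc, smul_neg]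
    rw [mul_comm ((-1:ℝ)^L.length) (-1), neg_one_mul, neg_smul]

lemma prodGen_reverse (L : List (Fin (r + s))) (h : L.Nodup) :
    prodGen r s L.reverse = ((-1 : ℝ) ^ tri L.length) • prodGen r s L := by
  induction L with
  | nil => simp [tri]
  | cons a L ih =>
    have haL : a ∉ L := (List.nodup_cons.1 h).1
    rw [List.reverse_cons]
    have : prodGen r s (L.reverse ++ [a]) = prodGen r s L.reverse * gen ℝ r s a := by
      simp [prodGen]
    rw [this, ih (List.nodup_cons.1 h).2, smul_mul_assoc,
      prodGen_mul_gen r s a L (by simpa using haL), List.length_cons]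
    rw [smul_smul, ← pow_add]
    show _ = ((-1:ℝ) ^ (tri L.length + L.length)) • _
    rw [prodGen_cons]

lemma involute_prodGen (L : List (Fin (r + s))) :
    involute (Q := Qf ℝ r s) (prodGen r s L) = ((-1 : ℝ) ^ L.length) • prodGen r s L := by
  induction L with
  | nil => simp
  | cons a L ih =>
    rw [prodGen_cons, map_mul, ih]
    have : involute (Q := Qf ℝ r s) (gen ℝ r s a) = -gen ℝ r s a := by
      rw [gen, involute_ι]
    rw [this, List.length_cons, pow_succ, neg_mul, mul_smul_comm, ← smul_neg, ← neg_mul]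
    rw [neg_mul, smul_neg, mul_comm ((-1:ℝ)^L.length) (-1), neg_one_mul, neg_smul]

lemma reverse_prodGen (L : List (Fin (r + s))) :
    reverse (Q := Qf ℝ r s) (prodGen r s L) = prodGen r s L.reverse := by
  induction L with
  | nil => simp [reverse.map_one]
  | cons a L ih =>
    rw [prodGen_cons, reverse.map_mul, ih, List.reverse_cons]
    have : reverse (Q := Qf ℝ r s) (gen ℝ r s a) = gen ℝ r s a := by
      rw [gen, reverse_ι]
    rw [this]
    simp [prodGen]

lemma conj_eProd (I : Finset (Fin (r + s))) :
    conj ℝ r s (eProd ℝ r s I)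
      = (if I.card % 4 = 1 ∨ I.card % 4 = 2 then (-1 : ℝ) else 1) • eProd ℝ r s I := by
  have hL : eProd ℝ r s I = prodGen r s (I.sort (· ≤ ·)) := rfl
  rw [hL, conj, LinearMap.comp_apply, AlgHom.toLinearMap_apply, involute_prodGen, map_smul,
    reverse_prodGen, prodGen_reverse r s _ (Finset.sort_nodup _ _), smul_smul, ← pow_add,
    Finset.length_sort]
  rw [add_comm I.card (tri I.card), neg_one_pow_tri]

def fsgn (i : Fin (r + s)) : ℝ := if (i : ℕ) < r then 1 else -1

variable (β : Cl ℝ r s ≃ₐ[ℝ] Cl ℝ r s)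
  (hβ : ∀ v : Fin (r + s) → ℝ,
      β (ι (Qf ℝ r s) v) = ι (Qf ℝ r s) (fun i => if (i : ℕ) < r then v i else -v i))

include hβ

lemma beta_gen (i : Fin (r + s)) :
    β (gen ℝ r s i) = fsgn r s i • gen ℝ r s i := by
  rw [gen, hβ, fsgn]
  by_cases h : (i : ℕ) < r
  · rw [if_pos h, one_smul]
    congr 1
    funext j
    by_cases hj : (j : ℕ) < r
    · simp [hj]
    · have : j ≠ i := fun hji => hj (hji ▸ h)
      simp [hj, Pi.single_apply, this]
  · rw [if_neg h, neg_one_smul, ← map_neg]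
    congr 1
    funext j
    by_cases hj : (j : ℕ) < r
    · have : j ≠ i := fun hji => h (hji ▸ hj)
      simp [hj, Pi.single_apply, this]
    · simp [hj]

lemma beta_prodGen (L : List (Fin (r + s))) :
    β (prodGen r s L) = ((L.map (fsgn r s)).prod) • prodGen r s L := by
  induction L with
  | nil => simp
  | cons a L ih =>
    rw [prodGen_cons, map_mul, ih, beta_gen r s β hβ, List.map_cons, List.prod_cons,
      smul_mul_smul_comm]

lemma beta_eProd (I : Finset (Fin (r + s))) :
    β (eProd ℝ r s I)
      = ((-1 : ℝ) ^ ((I.filter fun i : Fin (r + s) => ¬ ((i : ℕ) < r)).card))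
        • eProd ℝ r s I := by
  have h1 : eProd ℝ r s I = prodGen r s (I.sort (· ≤ ·)) := rfl
  rw [h1, beta_prodGen r s β hβ]
  congr 1
  have h2 : ((I.sort (· ≤ ·)).map (fsgn r s)).prod = ∏ i ∈ I, fsgn r s i := by
    rw [Finset.prod_eq_multiset_prod]
    have h : I.val = ↑(I.sort (· ≤ ·)) := (Finset.sort_eq I (· ≤ ·)).symm
    rw [h, Multiset.map_coe, Multiset.prod_coe]
  rw [h2]
  unfold fsgn
  rw [Finset.prod_ite, Finset.prod_const, Finset.prod_const, one_pow, one_mul]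

omit hβ

lemma card_filter_ge :
    ((Finset.univ : Finset (Fin (r + s))).filter
      fun i : Fin (r + s) => ¬ ((i : ℕ) < r)).card = s := by
  have h1 : ((Finset.univ : Finset (Fin (r + s))).filter
      fun i : Fin (r + s) => ((i : ℕ) < r)).card = r := by
    have : (Finset.univ : Finset (Fin (r + s))).filter (fun i : Fin (r + s) => ((i : ℕ) < r))
        = (Finset.univ : Finset (Fin r)).map (Fin.castAddEmb s) := by
      ext x
      simp only [Finset.mem_filter, Finset.mem_univ, true_and, Finset.mem_map]
      constructor
      · intro hx
        refine ⟨⟨(x : ℕ), hx⟩, ?_⟩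
        simp [Fin.castAddEmb, Fin.ext_iff]
      · rintro ⟨j, rfl⟩
        simpa [Fin.castAddEmb] using j.2
    rw [this, Finset.card_map, Finset.card_univ, Fintype.card_fin]
  have h2 := Finset.card_filter_add_card_filter_not
    (s := (Finset.univ : Finset (Fin (r + s)))) (p := fun i : Fin (r + s) => ((i : ℕ) < r))
  rw [Finset.card_univ, Fintype.card_fin] at h2
  omega

/-! ### A concrete representation of `Cl(r,s)` -/

abbrev RepM := Finset (Fin (r + s)) → ℝ

/-- toggle membership of `i` -/
def Dop (i : Fin (r + s)) (S : Finset (Fin (r + s))) : Finset (Fin (r + s)) :=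
  if i ∈ S then S.erase i else insert i S

lemma Dop_of_mem {i : Fin (r + s)} {S : Finset (Fin (r + s))} (h : i ∈ S) :
    Dop r s i S = S.erase i := if_pos h

lemma Dop_of_not_mem {i : Fin (r + s)} {S : Finset (Fin (r + s))} (h : i ∉ S) :
    Dop r s i S = insert i S := if_neg h

lemma Dop_Dop (i : Fin (r + s)) (S : Finset (Fin (r + s))) : Dop r s i (Dop r s i S) = S := by
  by_cases h : i ∈ S
  · rw [Dop_of_mem r s h, Dop_of_not_mem r s (Finset.notMem_erase i S), Finset.insert_erase h]
  · rw [Dop_of_not_mem r s h, Dop_of_mem r s (Finset.mem_insert_self i S), Finset.erase_insert h]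

lemma mem_Dop_ne {i j : Fin (r + s)} (h : j ≠ i) (S : Finset (Fin (r + s))) :
    j ∈ Dop r s i S ↔ j ∈ S := by
  by_cases hi : i ∈ S
  · rw [Dop_of_mem r s hi, Finset.mem_erase]
    exact ⟨fun h' => h'.2, fun h' => ⟨h, h'⟩⟩
  · rw [Dop_of_not_mem r s hi, Finset.mem_insert]
    exact ⟨fun h' => h'.resolve_left h, Or.inr⟩

lemma Dop_comm {i j : Fin (r + s)} (h : i ≠ j) (S : Finset (Fin (r + s))) :
    Dop r s j (Dop r s i S) = Dop r s i (Dop r s j S) := by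
  by_cases hi : i ∈ S <;> by_cases hj : j ∈ S
  · rw [Dop_of_mem r s hi, Dop_of_mem r s hj,
      Dop_of_mem r s (Finset.mem_erase.2 ⟨Ne.symm h, hj⟩),
      Dop_of_mem r s (Finset.mem_erase.2 ⟨h, hi⟩), Finset.erase_right_comm]
  · rw [Dop_of_mem r s hi, Dop_of_not_mem r s hj,
      Dop_of_not_mem r s (fun hc => hj (Finset.mem_erase.1 hc).2),
      Dop_of_mem r s (Finset.mem_insert_of_mem hi), Finset.erase_insert_of_ne (Ne.symm h)]
  · rw [Dop_of_not_mem r s hi, Dop_of_mem r s hj,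
      Dop_of_mem r s (Finset.mem_insert_of_mem hj),
      Dop_of_not_mem r s (fun hc => hi (Finset.mem_erase.1 hc).2),
      Finset.erase_insert_of_ne h]
  · rw [Dop_of_not_mem r s hi, Dop_of_not_mem r s hj,
      Dop_of_not_mem r s (fun hc => (Finset.mem_insert.1 hc).elim (fun e => h e.symm) hj),
      Dop_of_not_mem r s (fun hc => (Finset.mem_insert.1 hc).elim h hi),
      Finset.insert_comm i j S]

lemma filter_Dop_of_not_lt {i j : Fin (r + s)} (h : ¬ i < j) (S : Finset (Fin (r + s))) :
    (Dop r s i S).filter (· < j) = S.filter (· < j) := by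
  by_cases hi : i ∈ S
  · rw [Dop_of_mem r s hi, Finset.filter_erase, Finset.erase_eq_of_notMem]
    intro hc
    exact h (Finset.mem_filter.1 hc).2
  · rw [Dop_of_not_mem r s hi, Finset.filter_insert, if_neg h]

lemma sign_Dop_of_lt {i j : Fin (r + s)} (h : i < j) (S : Finset (Fin (r + s))) :
    ((-1 : ℝ)) ^ (((Dop r s i S).filter (· < j)).card)
      = -((-1 : ℝ) ^ ((S.filter (· < j)).card)) := by
  by_cases hi : i ∈ S
  · rw [Dop_of_mem r s hi, Finset.filter_erase,
      Finset.card_erase_of_mem (s := S.filter (· < j)) (a := i) (Finset.mem_filter.2 ⟨hi, h⟩)]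
    have hpos : 0 < (S.filter (· < j)).card :=
      Finset.card_pos.2 ⟨i, Finset.mem_filter.2 ⟨hi, h⟩⟩
    have hc : (S.filter (· < j)).card - 1 + 1 = (S.filter (· < j)).card :=
      Nat.succ_pred_eq_of_pos hpos
    have := pow_succ (-1 : ℝ) ((S.filter (· < j)).card - 1)
    rw [hc] at this
    rw [this]
    ring
  · rw [Dop_of_not_mem r s hi, Finset.filter_insert, if_pos h,
      Finset.card_insert_of_notMem (fun hc => hi (Finset.mem_filter.1 hc).1), pow_succ]
    ring

/-- the `i`-th Clifford operator on `RepM` -/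
noncomputable def op (i : Fin (r + s)) : RepM r s →ₗ[ℝ] RepM r s where
  toFun f := fun S => ((-1 : ℝ) ^ ((S.filter (· < i)).card))
    * (if i ∈ S then 1 else qi r s i) * f (Dop r s i S)
  map_add' f g := by funext S; simp only [Pi.add_apply]; ring
  map_smul' c f := by funext S; simp only [Pi.smul_apply, smul_eq_mul, RingHom.id_apply]; ring

lemma op_apply (i : Fin (r + s)) (f : RepM r s) (S : Finset (Fin (r + s))) :
    op r s i f S = ((-1 : ℝ) ^ ((S.filter (· < i)).card))
      * (if i ∈ S then 1 else qi r s i) * f (Dop r s i S) := rfl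

lemma neg_one_sq_pow (c : ℕ) : ((-1 : ℝ)) ^ c * (-1) ^ c = 1 := by
  rw [← pow_add]
  exact Even.neg_one_pow ⟨c, rfl⟩

lemma op_mul_self (i : Fin (r + s)) :
    (op r s i : Module.End ℝ (RepM r s)) * op r s i
      = qi r s i • (1 : Module.End ℝ (RepM r s)) := by
  refine LinearMap.ext fun f => funext fun S => ?_
  rw [Module.End.mul_apply, op_apply, op_apply, filter_Dop_of_not_lt r s (lt_irrefl i),
    Dop_Dop]
  have hmem : (i ∈ Dop r s i S) ↔ ¬ (i ∈ S) := by
    by_cases h : i ∈ S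
    · rw [Dop_of_mem r s h]
      simp [Finset.notMem_erase, h]
    · rw [Dop_of_not_mem r s h]
      simp [Finset.mem_insert_self, h]
  have hq : (if i ∈ S then (1:ℝ) else qi r s i) * (if i ∈ Dop r s i S then 1 else qi r s i)
      = qi r s i := by
    by_cases h : i ∈ S
    · rw [if_pos h, if_neg (by rw [hmem]; exact fun hc => hc h), one_mul]
    · rw [if_neg h, if_pos (hmem.2 h), mul_one]
  have key := neg_one_sq_pow ((S.filter (· < i)).card)
  show ((-1 : ℝ) ^ ((S.filter (· < i)).card)) * (if i ∈ S then 1 else qi r s i)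
      * (((-1 : ℝ) ^ ((S.filter (· < i)).card)) * (if i ∈ Dop r s i S then 1 else qi r s i)
        * f S) = (qi r s i • f) S
  rw [Pi.smul_apply, smul_eq_mul]
  calc ((-1 : ℝ) ^ ((S.filter (· < i)).card)) * (if i ∈ S then 1 else qi r s i)
      * (((-1 : ℝ) ^ ((S.filter (· < i)).card)) * (if i ∈ Dop r s i S then 1 else qi r s i)
        * f S)
      = (((-1 : ℝ) ^ ((S.filter (· < i)).card)) * ((-1 : ℝ) ^ ((S.filter (· < i)).card)))
        * ((if i ∈ S then (1:ℝ) else qi r s i) * (if i ∈ Dop r s i S then 1 else qi r s i))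
        * f S := by ring
    _ = qi r s i * f S := by rw [key, hq, one_mul]

lemma op_anticomm {i j : Fin (r + s)} (h : i ≠ j) :
    (op r s i : Module.End ℝ (RepM r s)) * op r s j = -(op r s j * op r s i) := by
  refine LinearMap.ext fun f => funext fun S => ?_
  rw [Module.End.mul_apply, LinearMap.neg_apply, Pi.neg_apply, Module.End.mul_apply,
    op_apply, op_apply, op_apply, op_apply, Dop_comm r s h]
  simp only [mem_Dop_ne r s (Ne.symm h) S, mem_Dop_ne r s h S]
  rcases lt_or_gt_of_ne h with hij | hij
  · rw [sign_Dop_of_lt r s hij, filter_Dop_of_not_lt r s (asymm hij)]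
    ring
  · rw [sign_Dop_of_lt r s hij, filter_Dop_of_not_lt r s (asymm hij)]
    ring

/-- the representing linear map -/
noncomputable def rho : (Fin (r + s) → ℝ) →ₗ[ℝ] Module.End ℝ (RepM r s) where
  toFun v := ∑ i, v i • (op r s i : Module.End ℝ (RepM r s))
  map_add' v w := by
    simp only [Pi.add_apply, add_smul]
    rw [Finset.sum_add_distrib]
  map_smul' c v := by
    simp only [Pi.smul_apply, smul_eq_mul, RingHom.id_apply, ← smul_smul]
    rw [Finset.smul_sum]

lemma rho_cond (v : Fin (r + s) → ℝ) :
    rho r s v * rho r s v = algebraMap ℝ (Module.End ℝ (RepM r s)) (Qf ℝ r s v) := by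
  have hA : rho r s v * rho r s v
      = ∑ i, ∑ j, (v i * v j) • ((op r s i : Module.End ℝ (RepM r s)) * op r s j) := by
    show (∑ i, v i • (op r s i : Module.End ℝ (RepM r s))) * (∑ j, v j • (op r s j :
      Module.End ℝ (RepM r s))) = _
    rw [Finset.sum_mul_sum]
    exact Finset.sum_congr rfl fun i _ => Finset.sum_congr rfl fun j _ => smul_mul_smul_comm _ _ _ _
  set A := ∑ i, ∑ j, (v i * v j) • ((op r s i : Module.End ℝ (RepM r s)) * op r s j) with hAdef
  set B := (∑ i, (qi r s i * (v i * v i))) • (1 : Module.End ℝ (RepM r s)) with hBdef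
  have hswap : A = ∑ i, ∑ j, (v j * v i) • ((op r s j : Module.End ℝ (RepM r s)) * op r s i) := by
    rw [hAdef]
    exact Finset.sum_comm
  have hdiag : ∀ i j : Fin (r + s),
      (v i * v j) • ((op r s i : Module.End ℝ (RepM r s)) * op r s j)
        + (v j * v i) • ((op r s j : Module.End ℝ (RepM r s)) * op r s i)
      = if j = i then (2 * (qi r s i * (v i * v i))) • (1 : Module.End ℝ (RepM r s)) else 0 := by
    intro i j
    by_cases hji : j = i
    · subst hji
      rw [if_pos rfl, op_mul_self, smul_smul, ← add_smul]
      congr 1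
      ring
    · rw [if_neg hji, op_anticomm r s (fun hc => hji hc.symm), smul_neg,
        mul_comm (v i) (v j), neg_add_cancel]
  have h2 : A + A = B + B := by
    nth_rewrite 2 [hswap]
    rw [← Finset.sum_add_distrib]
    have : ∀ i : Fin (r + s), (∑ j, (v i * v j) • ((op r s i : Module.End ℝ (RepM r s)) * op r s j))
        + (∑ j, (v j * v i) • ((op r s j : Module.End ℝ (RepM r s)) * op r s i))
        = (2 * (qi r s i * (v i * v i))) • (1 : Module.End ℝ (RepM r s)) := by
      intro i
      rw [← Finset.sum_add_distrib]
      rw [Finset.sum_congr rfl fun j _ => hdiag i j]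
      simp [Finset.sum_ite_eq']
    rw [Finset.sum_congr rfl fun i _ => this i, hBdef, ← Finset.sum_smul, ← add_smul]
    congr 1
    rw [← Finset.sum_add_distrib]
    exact Finset.sum_congr rfl fun i _ => (two_mul _)
  have hAB : A = B := by
    have h2' : (2 : ℝ) • A = (2 : ℝ) • B := by
      rw [two_smul, two_smul]; exact h2
    have := congrArg (fun x => ((1:ℝ)/2) • x) h2'
    simpa [smul_smul] using this
  rw [hA, hAB, hBdef, Algebra.algebraMap_eq_smul_one, Qf_apply']

/-- the representation as an algebra morphism -/
noncomputable def phi : Cl ℝ r s →ₐ[ℝ] Module.End ℝ (RepM r s) :=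
  CliffordAlgebra.lift (Qf ℝ r s) ⟨rho r s, rho_cond r s⟩

lemma phi_gen (i : Fin (r + s)) : phi r s (gen ℝ r s i) = op r s i := by
  rw [phi, gen, CliffordAlgebra.lift_ι_apply]
  have hr : rho r s (Pi.single i 1 : Fin (r + s) → ℝ)
      = ∑ j, (Pi.single i 1 : Fin (r + s) → ℝ) j • (op r s j : Module.End ℝ (RepM r s)) := rfl
  rw [hr, Finset.sum_eq_single i]
  · rw [Pi.single_eq_same, one_smul]
  · intro j _ hj
    rw [Pi.single_eq_of_ne hj, zero_smul]
  · intro h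
    exact absurd (Finset.mem_univ i) h

lemma op_single {i : Fin (r + s)} {T : Finset (Fin (r + s))} (hiT : i ∉ T)
    (hlt : ∀ j ∈ T, i < j) :
    op r s i (Pi.single T 1) = Pi.single (insert i T) (1 : ℝ) := by
  classical
  funext S
  rw [op_apply]
  by_cases hS : S = insert i T
  · subst hS
    have hiS : i ∈ insert i T := Finset.mem_insert_self i T
    have hD : Dop r s i (insert i T) = T := by
      rw [Dop_of_mem r s hiS, Finset.erase_insert hiT]
    have hfilter : (insert i T).filter (· < i) = ∅ := by
      rw [Finset.filter_eq_empty_iff]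
      intro x hx
      rcases Finset.mem_insert.1 hx with rfl | hx'
      · exact lt_irrefl x
      · exact asymm (hlt x hx')
    rw [hD, hfilter, if_pos hiS, Finset.card_empty, pow_zero, Pi.single_eq_same,
      Pi.single_eq_same]
    ring
  · have hD : Dop r s i S ≠ T := by
      intro hc
      by_cases hiS : i ∈ S
      · rw [Dop_of_mem r s hiS] at hc
        exact hS (by rw [← hc, Finset.insert_erase hiS])
      · rw [Dop_of_not_mem r s hiS] at hc
        exact hiT (hc ▸ Finset.mem_insert_self i S)
    rw [Pi.single_eq_of_ne hD, Pi.single_eq_of_ne hS]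
    ring

lemma phi_prodGen {L : List (Fin (r + s))} (h : L.Pairwise (· < ·)) :
    phi r s (prodGen r s L) (Pi.single ∅ 1) = Pi.single L.toFinset (1 : ℝ) := by
  induction L with
  | nil =>
    rw [prodGen_nil, map_one]
    simp
  | cons a L ih =>
    have haT : a ∉ L.toFinset := by
      rw [List.mem_toFinset]
      intro hc
      exact lt_irrefl a (List.rel_of_pairwise_cons h hc)
    have hlt : ∀ j ∈ L.toFinset, a < j := by
      intro j hj
      exact List.rel_of_pairwise_cons h (List.mem_toFinset.1 hj)
    rw [prodGen_cons, map_mul, Module.End.mul_apply, ih h.of_cons, phi_gen,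
      op_single r s haT hlt, List.toFinset_cons]

/-- the `ω`-coefficient functional -/
noncomputable def Lam : Cl ℝ r s →ₗ[ℝ] ℝ where
  toFun x := phi r s x (Pi.single ∅ 1) Finset.univ
  map_add' x y := by
    simp only [map_add, LinearMap.add_apply, Pi.add_apply]
  map_smul' c x := by
    simp only [map_smul, LinearMap.smul_apply, Pi.smul_apply, smul_eq_mul, RingHom.id_apply]

lemma Lam_eProd (I : Finset (Fin (r + s))) :
    Lam r s (eProd ℝ r s I) = if I = Finset.univ then 1 else 0 := by
  have h1 : eProd ℝ r s I = prodGen r s (I.sort (· ≤ ·)) := rfl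
  show phi r s (eProd ℝ r s I) (Pi.single ∅ 1) Finset.univ = _
  rw [h1, phi_prodGen r s (Finset.sortedLT_sort I).pairwise, Finset.sort_toFinset]
  rw [Pi.single_apply]
  by_cases h : I = Finset.univ
  · rw [if_pos h, if_pos h.symm]
  · rw [if_neg h, if_neg (fun hc => h hc.symm)]



end AuxCP

section MainCP
variable (r s : ℕ)

noncomputable def Pmap (β : Cl ℝ r s ≃ₐ[ℝ] Cl ℝ r s) : Cl ℝ r s →ₗ[ℝ] Cl ℝ r s :=
  ((1/2 : ℝ) • (β.toLinearMap + LinearMap.id)) ∘ₗ ((1/2 : ℝ) • (LinearMap.id - conj ℝ r s))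

lemma mem_Ksub (β : Cl ℝ r s ≃ₐ[ℝ] Cl ℝ r s) (x : Cl ℝ r s) :
    x ∈ Ksub ℝ r s β ↔ β x = x ∧ conj ℝ r s x = -x := by
  rw [Ksub, Submodule.mem_inf, mem_Gsub, LinearMap.mem_ker, LinearMap.sub_apply,
    AlgEquiv.toLinearMap_apply, LinearMap.id_apply, sub_eq_zero]

lemma Pmap_apply (β : Cl ℝ r s ≃ₐ[ℝ] Cl ℝ r s) (x : Cl ℝ r s) :
    Pmap r s β x = (1/2 : ℝ) • (β ((1/2 : ℝ) • (x - conj ℝ r s x))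
      + (1/2 : ℝ) • (x - conj ℝ r s x)) := rfl

lemma half_smul (y : Cl ℝ r s) : (1/2 : ℝ) • (y + y) = y := by
  rw [← two_smul ℝ y, smul_smul]
  norm_num

lemma Pmap_fix (β : Cl ℝ r s ≃ₐ[ℝ] Cl ℝ r s) {x : Cl ℝ r s} (hx : x ∈ Ksub ℝ r s β) :
    Pmap r s β x = x := by
  obtain ⟨hb, hc⟩ := (mem_Ksub r s β x).1 hx
  rw [Pmap_apply, hc, sub_neg_eq_add, half_smul, hb, half_smul]

def good (I : Finset (Fin (r + s))) : Prop :=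
  (I.card % 4 = 1 ∨ I.card % 4 = 2) ∧
    Even ((I.filter fun i : Fin (r + s) => ¬ ((i : ℕ) < r)).card)

instance : DecidablePred (good r s) := fun I => by
  unfold good
  infer_instance

lemma Pmap_eProd (β : Cl ℝ r s ≃ₐ[ℝ] Cl ℝ r s)
    (hβ : ∀ v : Fin (r + s) → ℝ,
      β (ι (Qf ℝ r s) v) = ι (Qf ℝ r s) (fun i => if (i : ℕ) < r then v i else -v i))
    (I : Finset (Fin (r + s))) :
    Pmap r s β (eProd ℝ r s I) = if good r s I then eProd ℝ r s I else 0 := by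
  rw [Pmap_apply, conj_eProd]
  by_cases h1 : I.card % 4 = 1 ∨ I.card % 4 = 2
  · rw [if_pos h1, neg_one_smul, sub_neg_eq_add, half_smul, beta_eProd r s β hβ]
    by_cases h2 : Even ((I.filter fun i : Fin (r + s) => ¬ ((i : ℕ) < r)).card)
    · rw [if_pos ⟨h1, h2⟩, h2.neg_one_pow, one_smul, half_smul]
    · rw [if_neg (fun hg : good r s I => h2 hg.2),
        (Nat.not_even_iff_odd.1 h2).neg_one_pow, neg_one_smul, neg_add_cancel, smul_zero]
  · rw [if_neg h1, if_neg (fun hg : good r s I => h1 hg.1), one_smul, sub_self, smul_zero,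
      map_zero, add_zero, smul_zero]

noncomputable def Sgood : Submodule ℝ (Cl ℝ r s) :=
  Submodule.span ℝ {y | ∃ I : Finset (Fin (r + s)), good r s I ∧ y = eProd ℝ r s I}

lemma Pmap_mem (β : Cl ℝ r s ≃ₐ[ℝ] Cl ℝ r s)
    (hβ : ∀ v : Fin (r + s) → ℝ,
      β (ι (Qf ℝ r s) v) = ι (Qf ℝ r s) (fun i => if (i : ℕ) < r then v i else -v i))
    (x : Cl ℝ r s) : Pmap r s β x ∈ Sgood r s := by
  have hx : x ∈ Submodule.span ℝ (Set.range (eProd ℝ r s)) := by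
    rw [span_eProd_top]
    trivial
  have hmem : Pmap r s β x
      ∈ Submodule.map (Pmap r s β) (Submodule.span ℝ (Set.range (eProd ℝ r s))) :=
    Submodule.mem_map_of_mem hx
  rw [Submodule.map_span] at hmem
  refine Submodule.span_le.2 ?_ hmem
  rintro y ⟨y', ⟨I, rfl⟩, rfl⟩
  rw [Pmap_eProd r s β hβ I]
  split_ifs with hg
  · exact Submodule.subset_span ⟨I, hg, rfl⟩
  · exact Submodule.zero_mem _

end MainCP

/-- if r+s ≡ 1 (mod 4) then (1) s even ⟹ 𝔎 = ℝω ⊕ 𝔎′ (internal direct sum),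
(2) s odd ⟹ 𝔎 = 𝔎′, where 𝔎′ = 𝔎 ∩ 𝔥. -/
theorem statement14 (r s : ℕ) (hn : 0 < r + s) (hmod : (r + s) % 4 = 1)
    (β : Cl ℝ r s ≃ₐ[ℝ] Cl ℝ r s)
    (hβ : ∀ v : Fin (r + s) → ℝ,
      β (ι (Qf ℝ r s) v) = ι (Qf ℝ r s) (fun i => if (i : ℕ) < r then v i else -v i)) :
    (Even s →
      Ksub ℝ r s β = (ℝ ∙ omegaEl ℝ r s) ⊔ (Ksub ℝ r s β ⊓ Hsub ℝ r s) ∧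
      Disjoint (ℝ ∙ omegaEl ℝ r s) (Ksub ℝ r s β ⊓ Hsub ℝ r s)) ∧
    (Odd s → Ksub ℝ r s β = Ksub ℝ r s β ⊓ Hsub ℝ r s) := by
  classical
  have homega : omegaEl ℝ r s = eProd ℝ r s Finset.univ := rfl
  have hgoodH : ∀ I : Finset (Fin (r + s)), good r s I → I ≠ Finset.univ →
      eProd ℝ r s I ∈ Hsub ℝ r s := by
    intro I hg hne
    apply Submodule.subset_span
    refine ⟨I, ?_, hne, hg.1, rfl⟩
    have hc : I.card ≠ 0 := by rcases hg.1 with h | h <;> omega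
    exact Finset.card_pos.1 (Nat.pos_of_ne_zero hc)
  have hsplit : Sgood r s ≤ (ℝ ∙ omegaEl ℝ r s) ⊔ Hsub ℝ r s := by
    apply Submodule.span_le.2
    rintro y ⟨I, hg, rfl⟩
    by_cases hI : I = Finset.univ
    · subst hI
      rw [← homega]
      exact Submodule.mem_sup_left (Submodule.mem_span_singleton_self _)
    · exact Submodule.mem_sup_right (hgoodH I hg hI)
  have hsplitodd : Odd s → Sgood r s ≤ Hsub ℝ r s := by
    intro hs
    apply Submodule.span_le.2
    rintro y ⟨I, hg, rfl⟩
    by_cases hI : I = Finset.univ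
    · exfalso
      subst hI
      have h2 := hg.2
      rw [card_filter_ge r s] at h2
      exact (Nat.not_odd_iff_even.2 h2) hs
    · exact hgoodH I hg hI
  have homega_mem : Even s → omegaEl ℝ r s ∈ Ksub ℝ r s β := by
    intro hs
    rw [mem_Ksub, homega]
    constructor
    · rw [beta_eProd r s β hβ, card_filter_ge r s, hs.neg_one_pow, one_smul]
    · rw [conj_eProd]
      have hcard : (Finset.univ : Finset (Fin (r + s))).card = r + s := by
        rw [Finset.card_univ, Fintype.card_fin]
      rw [if_pos (by rw [hcard]; exact Or.inl hmod), neg_one_smul]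
  refine ⟨fun hs => ⟨?_, ?_⟩, fun hs => ?_⟩
  · -- s even : equality
    apply le_antisymm
    · intro x hx
      have h1 : x ∈ (ℝ ∙ omegaEl ℝ r s) ⊔ Hsub ℝ r s := by
        have := hsplit (Pmap_mem r s β hβ x)
        rwa [Pmap_fix r s β hx] at this
      obtain ⟨y, hy, z, hz, hyz⟩ := Submodule.mem_sup.1 h1
      have hyK : y ∈ Ksub ℝ r s β := by
        obtain ⟨c, rfl⟩ := Submodule.mem_span_singleton.1 hy
        exact Submodule.smul_mem _ _ (homega_mem hs)
      have hzK : z ∈ Ksub ℝ r s β := by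
        have hz' : z = x - y := eq_sub_of_add_eq' hyz
        rw [hz']
        exact sub_mem hx hyK
      exact Submodule.mem_sup.2 ⟨y, hy, z, Submodule.mem_inf.2 ⟨hzK, hz⟩, hyz⟩
    · refine sup_le ?_ inf_le_left
      rw [Submodule.span_singleton_le_iff_mem]
      exact homega_mem hs
  · -- s even : disjointness
    rw [Submodule.disjoint_def]
    intro x hx1 hx2
    obtain ⟨c, rfl⟩ := Submodule.mem_span_singleton.1 hx1
    have hH : c • omegaEl ℝ r s ∈ Hsub ℝ r s := (Submodule.mem_inf.1 hx2).2
    have hker : Hsub ℝ r s ≤ LinearMap.ker (Lam r s) := by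
      apply Submodule.span_le.2
      rintro y ⟨I, hne, hneu, hmod4, rfl⟩
      rw [SetLike.mem_coe, LinearMap.mem_ker, Lam_eProd, if_neg hneu]
    have h0 : Lam r s (c • omegaEl ℝ r s) = 0 := hker hH
    rw [map_smul, smul_eq_mul, homega, Lam_eProd, if_pos rfl, mul_one] at h0
    rw [h0, zero_smul]
  · -- s odd
    apply le_antisymm
    · refine le_inf le_rfl ?_
      intro x hx
      have := hsplitodd hs (Pmap_mem r s β hβ x)
      rwa [Pmap_fix r s β hx] at this
    · exact inf_le_left

end CliffPaper
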